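/- Let R = ℂ[y_π : π an LS-path of degree 1] be the polynomial ring with one indeterminate for each degree-1 LS-path, and let φ : R → ℂ[x_0,…,x_N] be the ℂ-algebra homomorphism with φ(y_π) = x^π. Then φ maps R onto the discrete LS algebra A, and the kernel of φ is generated by the quadratic binomials y_π·y_{π′} − y_{π_0}·y_{π_0′}, where (π, π′) ranges over all pairs of degree-1 LS-paths that are non-standard (i.e., it is not the case that max supp π ≤ min supp π′), and (π_0, π_0′) is the canonical form of π + π′, i.e., the unique standard pair of degree-1 LS-paths with π_0 + π_0′ = π + π′ pointwise. -/
import Mathlib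


open Finset MvPolynomial

/-- `Mf b i` is `M_i = lcm(b_{i-1}, b_i)`, with the convention `b_{-1} = 1`
(the convention `b_N = 1` is imposed as a hypothesis in the statements). -/
def Mf (b : ℕ → ℕ) (i : ℕ) : ℕ := Nat.lcm (if i = 0 then 1 else b (i - 1)) (b i)

/-- An LS-path of degree `r` over the totally ordered set `{0, …, N}` with bonds `b`:
a function `π : {0,…,N} → ℚ` (modelled as `π : ℕ → ℚ` vanishing above `N`) with
nonnegative values, integrality `b_j·(π 0 + ⋯ + π j) ∈ ℤ` for all `0 ≤ j ≤ N-1`,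
and total sum `π 0 + ⋯ + π N = r`. -/
def IsLSPath (N : ℕ) (b : ℕ → ℕ) (r : ℕ) (π : ℕ → ℚ) : Prop :=
  (∀ i, 0 ≤ π i) ∧ (∀ i, N < i → π i = 0) ∧
  (∀ j < N, ∃ k : ℤ, (b j : ℚ) * (∑ i ∈ Finset.range (j + 1), π i) = k) ∧
  (∑ i ∈ Finset.range (N + 1), π i = r)

/-- `SuppLE π π'` says `max supp π ≤ min supp π'`:
every element of the support of `π` is `≤` every element of the support of `π'`. -/
def SuppLE (π π' : ℕ → ℚ) : Prop := ∀ i j, π i ≠ 0 → π' j ≠ 0 → i ≤ j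

/-- The monomial `x^π = ∏_{i=0}^{N} x_i ^ (M_i · π i)` in `ℂ[x_0,…,x_N]`
(the exponents `M_i · π i` are nonnegative integers for an LS-path `π`). -/
noncomputable def xpow (N : ℕ) (b : ℕ → ℕ) (π : ℕ → ℚ) :
    MvPolynomial (Fin (N + 1)) ℂ :=
  MvPolynomial.monomial
    (Finsupp.equivFunOnFinite.symm fun i : Fin (N + 1) => ⌊(Mf b i : ℚ) * π i⌋₊) (1 : ℂ)

/-- The discrete LS algebra over `(S, ≤, b)`: the `ℂ`-linear span in `ℂ[x_0,…,x_N]`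
of the monomials `x^π`, with `π` ranging over all LS-paths of all degrees. -/
noncomputable def discreteLS (N : ℕ) (b : ℕ → ℕ) :
    Submodule ℂ (MvPolynomial (Fin (N + 1)) ℂ) :=
  Submodule.span ℂ {p | ∃ r π, IsLSPath N b r π ∧ p = xpow N b π}

/-- The degree-`r` graded component `A_r = span_ℂ {x^π : π an LS-path of degree r}`. -/
noncomputable def discreteLSdeg (N : ℕ) (b : ℕ → ℕ) (r : ℕ) :
    Submodule ℂ (MvPolynomial (Fin (N + 1)) ℂ) :=
  Submodule.span ℂ {p | ∃ π, IsLSPath N b r π ∧ p = xpow N b π}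


namespace S17

/-- partial sums -/
def P (π : ℕ → ℚ) (j : ℕ) : ℚ := ∑ i ∈ Finset.range j, π i

lemma P_zero (π : ℕ → ℚ) : P π 0 = 0 := by simp [P]

lemma P_succ (π : ℕ → ℚ) (j : ℕ) : P π (j+1) = P π j + π j := Finset.sum_range_succ _ _

lemma P_add (π π' : ℕ → ℚ) (j : ℕ) : P (π + π') j = P π j + P π' j := by
  simp [P, Finset.sum_add_distrib]

lemma P_sub (π π' : ℕ → ℚ) (j : ℕ) : P (π - π') j = P π j - P π' j := by
  simp [P, Finset.sum_sub_distrib]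

lemma apply_eq_P (π : ℕ → ℚ) (i : ℕ) : π i = P π (i+1) - P π i := by
  rw [P_succ]; ring

section basic
variable {N : ℕ} {b : ℕ → ℕ} {r : ℕ} {π : ℕ → ℚ}

lemma P_mono (h : ∀ i, 0 ≤ π i) {j k : ℕ} (hjk : j ≤ k) : P π j ≤ P π k := by
  unfold P
  exact Finset.sum_le_sum_of_subset_of_nonneg (Finset.range_subset_range.2 hjk)
    (fun i _ _ => h i)

lemma P_nonneg (h : ∀ i, 0 ≤ π i) (j : ℕ) : 0 ≤ P π j := by
  simpa [P_zero] using P_mono h (Nat.zero_le j)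

lemma P_stable (hπ : IsLSPath N b r π) {j : ℕ} (hj : N + 1 ≤ j) : P π j = r := by
  have : P π j = P π (N+1) := by
    unfold P
    rw [← Finset.sum_range_add_sum_Ico _ hj]
    have hz : ∑ i ∈ Finset.Ico (N+1) j, π i = 0 :=
      Finset.sum_eq_zero fun i hi => hπ.2.1 i (Nat.lt_of_succ_le (Finset.mem_Ico.1 hi).1)
    rw [hz, add_zero]
  rw [this]; exact hπ.2.2.2

lemma P_le (hπ : IsLSPath N b r π) (j : ℕ) : P π j ≤ r := by
  rcases le_or_gt j (N+1) with h | h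
  · calc P π j ≤ P π (N+1) := P_mono hπ.1 h
      _ = r := hπ.2.2.2
  · rw [P_stable hπ h.le]

/-- the key integrality: `b j * P π (j+1) ∈ ℤ` for all j (using b N = 1 etc.) -/
lemma P_int (hbN : b N = 1) (hπ : IsLSPath N b r π) (j : ℕ) (hj : j ≤ N) :
    ∃ k : ℤ, (b j : ℚ) * P π (j+1) = k := by
  rcases lt_or_eq_of_le hj with h | h
  · exact hπ.2.2.1 j h
  · subst h; exact ⟨r, by rw [show P π (j+1) = (r:ℚ) from hπ.2.2.2, hbN]; push_cast; ring⟩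

end basic
end S17

-- appended to core
namespace S17

/-- clamp x to [k, k+1] -/
def cl (k : ℕ) (x : ℚ) : ℚ := min (max x k) (k+1)

lemma cl_mono (k : ℕ) : Monotone (cl k) := fun x y h =>
  min_le_min (max_le_max h le_rfl) le_rfl

lemma cl_of_le {k : ℕ} {x : ℚ} (h : x ≤ k) : cl k x = k := by
  unfold cl; rw [max_eq_right h, min_eq_left (by push_cast; linarith)]

lemma cl_of_ge {k : ℕ} {x : ℚ} (h : (k:ℚ)+1 ≤ x) : cl k x = k+1 := by
  unfold cl; rw [max_eq_left (by linarith), min_eq_right h]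

lemma cl_of_mem {k : ℕ} {x : ℚ} (h1 : (k:ℚ) ≤ x) (h2 : x ≤ k+1) : cl k x = x := by
  unfold cl; rw [max_eq_left h1, min_eq_left h2]

lemma cl_cases (k : ℕ) (x : ℚ) : cl k x = x ∨ cl k x = k ∨ cl k x = (k:ℚ)+1 := by
  unfold cl
  rcases le_total x k with h | h
  · right; left; rw [max_eq_right h, min_eq_left (by push_cast; linarith)]
  · rcases le_total x ((k:ℚ)+1) with h2 | h2
    · left; rw [max_eq_left h, min_eq_left h2]
    · right; right; rw [max_eq_left h, min_eq_right h2]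

lemma cl_le (k : ℕ) (x : ℚ) : cl k x ≤ (k:ℚ)+1 := min_le_right _ _
lemma le_cl (k : ℕ) (x : ℚ) : (k:ℚ) ≤ cl k x := le_min (le_max_right _ _) (by push_cast; linarith)

/-- `cut σ k` is the degree-1 piece of σ between cumulative mass k and k+1. -/
def cut (σ : ℕ → ℚ) (k : ℕ) (i : ℕ) : ℚ := cl k (P σ (i+1)) - cl k (P σ i)

lemma P_cut (σ : ℕ → ℚ) (k : ℕ) (j : ℕ) : P (cut σ k) j = cl k (P σ j) - k := by
  unfold P cut
  rw [Finset.sum_range_sub (fun i => cl k (P σ i)) j,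
    show P σ 0 = 0 from P_zero σ, cl_of_le (by exact_mod_cast k.cast_nonneg : (0:ℚ) ≤ k)]
  rfl

section cutsec
variable {N : ℕ} {b : ℕ → ℕ} {r : ℕ} {σ : ℕ → ℚ}

lemma cut_isLSPath (hbN : b N = 1) (hσ : IsLSPath N b r σ) {k : ℕ} (hk : k < r) :
    IsLSPath N b 1 (cut σ k) := by
  refine ⟨fun i => ?_, fun i hi => ?_, fun j hj => ?_, ?_⟩
  · exact sub_nonneg.2 (cl_mono k (P_mono hσ.1 (Nat.le_succ i)))
  · unfold cut
    rw [show P σ (i+1) = P σ i from ?_, sub_self]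
    rw [P_succ, hσ.2.1 i hi, add_zero]
  · obtain ⟨m, hm⟩ := hσ.2.2.1 j hj
    have hsum : ∑ i ∈ Finset.range (j+1), cut σ k i = cl k (P σ (j+1)) - k := by
      rw [← P_cut]; rfl
    rw [hsum]
    have hm' : (b j : ℚ) * P σ (j+1) = m := hm
    rcases cl_cases k (P σ (j+1)) with h | h | h
    · exact ⟨m - b j * k, by rw [h]; rw [mul_sub, hm']; push_cast; ring⟩
    · exact ⟨0, by rw [h]; push_cast; ring⟩
    · exact ⟨b j, by rw [h]; push_cast; ring⟩
  · have hsum : ∑ i ∈ Finset.range (N+1), cut σ k i = cl k (P σ (N+1)) - k := by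
      rw [← P_cut]; rfl
    rw [hsum, show P σ (N+1) = (r:ℚ) from hσ.2.2.2,
      cl_of_ge (by exact_mod_cast Nat.succ_le_of_lt hk)]
    push_cast; ring

lemma sum_cl (r : ℕ) {x : ℚ} (hx : 0 ≤ x) :
    ∑ k ∈ Finset.range r, (cl k x - k) = min x r := by
  induction r with
  | zero => simp [min_eq_right hx]
  | succ n ih =>
    rw [Finset.sum_range_succ, ih]
    rcases le_total x n with h | h
    · rw [cl_of_le h, min_eq_left h, min_eq_left (by push_cast; linarith), sub_self, add_zero]
    · rw [min_eq_right h]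
      rcases le_total x ((n:ℚ)+1) with h2 | h2
      · rw [cl_of_mem h h2, min_eq_left (by push_cast; linarith)]
        push_cast; ring
      · rw [cl_of_ge h2, min_eq_right (by push_cast; linarith)]
        push_cast; ring

lemma sum_cut (hσ : IsLSPath N b r σ) (i : ℕ) :
    ∑ k ∈ Finset.range r, cut σ k i = σ i := by
  unfold cut
  rw [Finset.sum_sub_distrib]
  have e1 : ∑ k ∈ Finset.range r, cl k (P σ (i+1)) =
      (∑ k ∈ Finset.range r, ((cl k (P σ (i+1)) - k) + k)) := by
    apply Finset.sum_congr rfl; intros; ring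
  have e2 : ∑ k ∈ Finset.range r, cl k (P σ i) =
      (∑ k ∈ Finset.range r, ((cl k (P σ i) - k) + k)) := by
    apply Finset.sum_congr rfl; intros; ring
  rw [e1, e2, Finset.sum_add_distrib, Finset.sum_add_distrib,
    sum_cl r (P_nonneg hσ.1 _), sum_cl r (P_nonneg hσ.1 _),
    min_eq_left (P_le hσ _), min_eq_left (P_le hσ _)]
  rw [apply_eq_P σ i]; ring

lemma cut_suppLE (hσ : ∀ i, 0 ≤ σ i) {k l : ℕ} (hkl : k < l) :
    SuppLE (cut σ k) (cut σ l) := by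
  intro i j hi hj
  by_contra hij
  push_neg at hij   -- j < i
  have h1 : P σ i < (k:ℚ) + 1 := by
    by_contra h; push_neg at h
    have : cl k (P σ (i+1)) = (k:ℚ)+1 := cl_of_ge (le_trans h (P_mono hσ (Nat.le_succ i)))
    exact hi (by unfold cut; rw [this, cl_of_ge h, sub_self])
  have h2 : (l:ℚ) < P σ (j+1) := by
    by_contra h; push_neg at h
    have hj' : P σ j ≤ (l:ℚ) := le_trans (P_mono hσ (Nat.le_succ j)) h
    exact hj (by unfold cut; rw [cl_of_le h, cl_of_le (le_trans (P_mono hσ (Nat.le_succ j)) h)]; ring)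
  have : P σ (j+1) ≤ P σ i := P_mono hσ hij
  have : (l:ℚ) < (k:ℚ) + 1 := by linarith
  have : (k:ℚ) + 1 ≤ (l:ℚ) := by exact_mod_cast Nat.succ_le_of_lt hkl
  linarith

end cutsec
end S17

namespace S17
section alg
variable {N : ℕ} {b : ℕ → ℕ} {r s : ℕ} {π π' σ : ℕ → ℚ}

lemma isLSPath_add (hπ : IsLSPath N b r π) (hπ' : IsLSPath N b s π') :
    IsLSPath N b (r + s) (π + π') := by
  refine ⟨fun i => add_nonneg (hπ.1 i) (hπ'.1 i),
    fun i hi => by simp [Pi.add_apply, hπ.2.1 i hi, hπ'.2.1 i hi],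
    fun j hj => ?_, ?_⟩
  · obtain ⟨m, hm⟩ := hπ.2.2.1 j hj
    obtain ⟨m', hm'⟩ := hπ'.2.2.1 j hj
    exact ⟨m + m', by rw [show (∑ i ∈ Finset.range (j+1), (π + π') i) =
      (∑ i ∈ Finset.range (j+1), π i) + (∑ i ∈ Finset.range (j+1), π' i) by
        simp [Finset.sum_add_distrib], mul_add, hm, hm']; push_cast; ring⟩
  · rw [show (∑ i ∈ Finset.range (N+1), (π + π') i) =
      (∑ i ∈ Finset.range (N+1), π i) + (∑ i ∈ Finset.range (N+1), π' i) by
        simp [Finset.sum_add_distrib], hπ.2.2.2, hπ'.2.2.2]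
    push_cast; ring

lemma Mf_pos (hN : 1 ≤ N) (hb : ∀ i < N, 0 < b i) (hbN : b N = 1) {i : ℕ} (hi : i ≤ N) :
    0 < Mf b i := by
  have h2 : 0 < b i := by
    rcases lt_or_eq_of_le hi with h | h
    · exact hb i h
    · rw [h, hbN]; norm_num
  have h1 : 0 < (if i = 0 then 1 else b (i - 1)) := by
    split
    · norm_num
    · rename_i h
      have : i - 1 < N := by omega
      exact hb _ this
  exact Nat.lcm_pos h1 h2

/-- key integrality: `M_i * π i` is a natural number. -/
lemma exp_nat (hbN : b N = 1) (hπ : IsLSPath N b r π) (i : ℕ) :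
    ∃ m : ℕ, (Mf b i : ℚ) * π i = m := by
  rcases le_or_gt i N with hi | hi
  · -- M_i * π i = M_i P(i+1) - M_i P(i), both integral
    obtain ⟨k1, hk1⟩ := P_int hbN hπ i hi
    obtain ⟨c1, hc1⟩ : ∃ c : ℕ, Mf b i = c * b i := ⟨Nat.lcm _ _ / b i,
      (Nat.div_mul_cancel (Nat.dvd_lcm_right _ _)).symm⟩
    have int1 : ∃ m1 : ℤ, (Mf b i : ℚ) * P π (i+1) = m1 :=
      ⟨c1 * k1, by rw [hc1]; push_cast; rw [mul_assoc, hk1]⟩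
    have int2 : ∃ m2 : ℤ, (Mf b i : ℚ) * P π i = m2 := by
      rcases Nat.eq_zero_or_pos i with h0 | h0
      · exact ⟨0, by rw [h0, P_zero]; push_cast; ring⟩
      · obtain ⟨k2, hk2⟩ := P_int hbN hπ (i-1) (by omega)
        obtain ⟨c2, hc2⟩ : ∃ c : ℕ, Mf b i = c * b (i-1) := by
          refine ⟨Nat.lcm _ _ / b (i-1), (Nat.div_mul_cancel ?_).symm⟩
          have : (if i = 0 then 1 else b (i-1)) = b (i-1) := by
            rw [if_neg (by omega)]
          exact this ▸ Nat.dvd_lcm_left _ _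
        have hPi : P π i = P π (i-1+1) := by rw [show i - 1 + 1 = i by omega]
        exact ⟨c2 * k2, by rw [hPi, hc2]; push_cast; rw [mul_assoc, hk2]⟩
    obtain ⟨m1, hm1⟩ := int1; obtain ⟨m2, hm2⟩ := int2
    have hval : (Mf b i : ℚ) * π i = (m1 - m2 : ℤ) := by
      rw [apply_eq_P π i, mul_sub, hm1, hm2]; push_cast; ring
    have hnn : (0:ℚ) ≤ ((m1 - m2 : ℤ) : ℚ) := by
      rw [← hval]; exact mul_nonneg (Nat.cast_nonneg _) (hπ.1 i)
    have hnn' : (0:ℤ) ≤ m1 - m2 := by exact_mod_cast hnn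
    lift (m1 - m2 : ℤ) to ℕ using hnn' with m hm
    exact ⟨m, by rw [hval]; norm_cast⟩
  · exact ⟨0, by rw [hπ.2.1 i hi]; push_cast; ring⟩

end alg
end S17

namespace S17

/-- the exponent vector of `xpow` -/
noncomputable def xv (N : ℕ) (b : ℕ → ℕ) (π : ℕ → ℚ) : Fin (N + 1) →₀ ℕ :=
  Finsupp.equivFunOnFinite.symm fun i : Fin (N + 1) => ⌊(Mf b i : ℚ) * π i⌋₊

lemma xpow_eq (N : ℕ) (b : ℕ → ℕ) (π : ℕ → ℚ) :
    xpow N b π = MvPolynomial.monomial (xv N b π) 1 := rfl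

lemma xv_apply (N : ℕ) (b : ℕ → ℕ) (π : ℕ → ℚ) (i : Fin (N+1)) :
    xv N b π i = ⌊(Mf b i : ℚ) * π i⌋₊ := rfl

section xp
variable {N : ℕ} {b : ℕ → ℕ} {r s : ℕ} {π π' : ℕ → ℚ}

lemma xv_add (hbN : b N = 1) (hπ : IsLSPath N b r π) (hπ' : IsLSPath N b s π') :
    xv N b (π + π') = xv N b π + xv N b π' := by
  ext i
  obtain ⟨m, hm⟩ := exp_nat hbN hπ (i : ℕ)
  obtain ⟨m', hm'⟩ := exp_nat hbN hπ' (i : ℕ)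
  rw [Finsupp.add_apply, xv_apply, xv_apply, xv_apply, hm, hm',
    show (Mf b i : ℚ) * (π + π') i = (Mf b i : ℚ) * π i + (Mf b i : ℚ) * π' i by
      simp [Pi.add_apply]; ring, hm, hm']
  push_cast
  rw [Nat.floor_natCast, Nat.floor_natCast, ← Nat.cast_add, Nat.floor_natCast]

lemma xpow_mul (hbN : b N = 1) (hπ : IsLSPath N b r π) (hπ' : IsLSPath N b s π') :
    xpow N b (π + π') = xpow N b π * xpow N b π' := by
  rw [xpow_eq, xpow_eq, xpow_eq, MvPolynomial.monomial_mul, xv_add hbN hπ hπ', mul_one]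

lemma xv_inj (hN : 1 ≤ N) (hb : ∀ i < N, 0 < b i) (hbN : b N = 1)
    (hπ : IsLSPath N b r π) (hπ' : IsLSPath N b s π')
    (h : xv N b π = xv N b π') : π = π' := by
  funext i
  rcases le_or_gt i N with hi | hi
  · have hi' : i < N + 1 := by omega
    have := DFunLike.congr_fun h ⟨i, hi'⟩
    simp only [xv_apply] at this
    obtain ⟨m, hm⟩ := exp_nat hbN hπ i
    obtain ⟨m', hm'⟩ := exp_nat hbN hπ' i
    rw [hm, hm', Nat.floor_natCast, Nat.floor_natCast] at this
    have hMf : (0:ℚ) < (Mf b i : ℚ) := by exact_mod_cast Mf_pos hN hb hbN hi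
    have : (Mf b i : ℚ) * π i = (Mf b i : ℚ) * π' i := by rw [hm, hm', this]
    exact mul_left_cancel₀ (ne_of_gt hMf) this
  · rw [hπ.2.1 i hi, hπ'.2.1 i hi]

end xp
end S17

namespace S17
section keylem
variable {N : ℕ} {b : ℕ → ℕ} {π π' ψ σ : ℕ → ℚ}

lemma cl_zero_eq {x : ℚ} (hx : 0 ≤ x) : cl 0 x = min x 1 := by
  unfold cl; push_cast; rw [max_eq_left hx, zero_add]

lemma cut_apply (σ : ℕ → ℚ) (k i : ℕ) :
    cut σ k i = cl k (P σ (i+1)) - cl k (P σ i) := rfl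

lemma cut_self (hπ : IsLSPath N b 1 π) : cut π 0 = π := by
  funext i
  unfold cut
  have h1 : ∀ j, cl 0 (P π j) = P π j := fun j =>
    cl_of_mem (by simpa using P_nonneg hπ.1 j) (by simpa using P_le hπ j)
  rw [h1, h1, ← apply_eq_P]

lemma P_le_one_of_suppLE (hπ : IsLSPath N b 1 π) (hπ' : IsLSPath N b 1 π')
    (hst : SuppLE π π') (j : ℕ) : P π j = min (P (π+π') j) 1 := by
  by_cases hz : ∀ i < j, π' i = 0
  · have hP' : P π' j = 0 := Finset.sum_eq_zero fun i hi => hz i (Finset.mem_range.1 hi)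
    rw [P_add, hP', add_zero, min_eq_left (by simpa using P_le hπ j : P π j ≤ 1)]
  · push_neg at hz
    obtain ⟨i0, hi0, hi0'⟩ := hz
    have hPj : P π j = 1 := by
      have hsupp : ∀ i', j ≤ i' → π i' = 0 := by
        intro i' hji'
        by_contra hne
        exact absurd (hst i' i0 hne hi0') (by omega)
      have hstab : ∀ m, j ≤ m → P π m = P π j := by
        intro m hm
        unfold P
        rw [← Finset.sum_range_add_sum_Ico _ hm]
        have : ∑ i ∈ Finset.Ico j m, π i = 0 :=
          Finset.sum_eq_zero fun i hi => hsupp i (Finset.mem_Ico.1 hi).1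
        rw [this, add_zero]
      have := hstab (max j (N+1)) (le_max_left _ _)
      rw [P_stable hπ (le_max_right _ _)] at this
      exact_mod_cast this.symm
    rw [hPj, P_add, min_eq_right]
    have : 0 < P π' j := by
      have : π' i0 ≤ P π' j := by
        calc π' i0 = P π' (i0+1) - P π' i0 := apply_eq_P π' i0
          _ ≤ P π' j - 0 := by
              gcongr
              · exact P_mono hπ'.1 (by omega)
              · exact P_nonneg hπ'.1 _
          _ = P π' j := by ring
      rcases lt_or_eq_of_le (hπ'.1 i0) with h | h
      · linarith
      · exact absurd h.symm hi0'
    linarith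

lemma pair_unique (hπ : IsLSPath N b 1 π) (hπ' : IsLSPath N b 1 π')
    (hst : SuppLE π π') : cut (π+π') 0 = π ∧ cut (π+π') 1 = π' := by
  have hσnn : ∀ i, 0 ≤ (π+π') i := fun i => add_nonneg (hπ.1 i) (hπ'.1 i)
  have hc0 : cut (π+π') 0 = π := by
    funext i
    unfold cut
    rw [cl_zero_eq (P_nonneg hσnn _), cl_zero_eq (P_nonneg hσnn _),
      ← P_le_one_of_suppLE hπ hπ' hst, ← P_le_one_of_suppLE hπ hπ' hst, ← apply_eq_P]
  refine ⟨hc0, ?_⟩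
  have hσ : IsLSPath N b 2 (π+π') := isLSPath_add hπ hπ'
  funext i
  have := sum_cut hσ i
  rw [show (2:ℕ) = 1 + 1 from rfl, Finset.sum_range_succ, Finset.sum_range_one] at this
  have hc0i := congrFun hc0 i
  have : cut (π+π') 1 i = (π+π') i - π i := by rw [← hc0i]; linarith
  rw [this]; simp [Pi.add_apply]

lemma absorb (hπ : ∀ i, 0 ≤ π i) (hψ : ∀ i, 0 ≤ ψ i) :
    cut (π + cut ψ 0) 0 = cut (π + ψ) 0 := by
  have key : ∀ j, cl 0 (P (π + cut ψ 0) j) = cl 0 (P (π + ψ) j) := by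
    intro j
    have h1 : P (π + cut ψ 0) j = P π j + min (P ψ j) 1 := by
      rw [P_add, P_cut, cl_zero_eq (P_nonneg hψ _)]
      push_cast; ring
    have hπn := P_nonneg hπ j
    have hψn := P_nonneg hψ j
    rw [h1, P_add, cl_zero_eq (by positivity : (0:ℚ) ≤ P π j + min (P ψ j) 1),
      cl_zero_eq (by positivity)]
    simp only [min_def, max_def]
    split_ifs <;> linarith
  funext i
  rw [cut_apply, cut_apply, key, key]

lemma P_shift (hσ : ∀ i, 0 ≤ σ i) (j : ℕ) :
    P (σ - cut σ 0) j = max (P σ j - 1) 0 := by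
  rw [P_sub, P_cut, cl_zero_eq (P_nonneg hσ _)]
  have := P_nonneg hσ j
  push_cast
  simp only [min_def, max_def]
  split_ifs <;> linarith

lemma cut_shift (hσ : ∀ i, 0 ≤ σ i) (k : ℕ) :
    cut (σ - cut σ 0) k = cut σ (k+1) := by
  have key : ∀ j, cl k (P (σ - cut σ 0) j) = cl (k+1) (P σ j) - 1 := by
    intro j
    rw [P_shift hσ]
    have hn := P_nonneg hσ j
    have hk : (0:ℚ) ≤ (k:ℚ) := Nat.cast_nonneg k
    unfold cl
    push_cast
    simp only [min_def, max_def]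
    split_ifs <;> linarith
  funext i
  rw [cut_apply, cut_apply, key, key]; ring

end keylem
end S17

namespace S17

variable (N : ℕ) (b : ℕ → ℕ)

abbrev T := {π : ℕ → ℚ // IsLSPath N b 1 π}

noncomputable def phi : MvPolynomial (T N b) ℂ →ₐ[ℂ] MvPolynomial (Fin (N + 1)) ℂ :=
  MvPolynomial.aeval (fun π : T N b => xpow N b π.1)

def Igen : Set (MvPolynomial (T N b) ℂ) :=
  {f | ∃ π π' π₀ π₀' : T N b,
    ¬ SuppLE π.1 π'.1 ∧ SuppLE π₀.1 π₀'.1 ∧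
    (∀ i, π₀.1 i + π₀'.1 i = π.1 i + π'.1 i) ∧
    f = MvPolynomial.X π * MvPolynomial.X π' - MvPolynomial.X π₀ * MvPolynomial.X π₀'}

def sumPath (l : List (T N b)) : ℕ → ℚ := (l.map Subtype.val).sum

lemma sumPath_nil : sumPath N b [] = 0 := rfl

lemma sumPath_cons (π : T N b) (l : List (T N b)) :
    sumPath N b (π :: l) = π.1 + sumPath N b l := by
  unfold sumPath; simp

lemma isLSPath_zero : IsLSPath N b 0 0 := by
  refine ⟨fun i => le_refl 0, fun i _ => rfl, fun j _ => ⟨0, by simp⟩, by simp⟩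

lemma sumPath_isLSPath : ∀ l : List (T N b), IsLSPath N b l.length (sumPath N b l)
  | [] => isLSPath_zero N b
  | π :: t => by
    rw [sumPath_cons]
    have := isLSPath_add π.2 (sumPath_isLSPath t)
    simpa [add_comm] using this

lemma xpow_zero : xpow N b 0 = 1 := by
  rw [xpow_eq, show xv N b 0 = 0 from ?_, MvPolynomial.monomial_zero']
  · rfl
  · ext i; rw [xv_apply]; norm_num

lemma phi_X (π : T N b) : phi N b (MvPolynomial.X π) = xpow N b π.1 :=
  MvPolynomial.aeval_X _ _

lemma phi_prod (hbN : b N = 1) :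
    ∀ l : List (T N b), phi N b ((l.map MvPolynomial.X).prod) = xpow N b (sumPath N b l)
  | [] => by simp [sumPath_nil, xpow_zero]
  | π :: t => by
    rw [List.map_cons, List.prod_cons, map_mul, phi_X, phi_prod hbN t, sumPath_cons,
      xpow_mul hbN π.2 (sumPath_isLSPath N b t)]

section straightening
variable {N b} (hbN : b N = 1)
include hbN

/-- the pair relation: any product of two variables is congruent to the canonical pair -/
lemma pairRel (π π' : T N b) :
    ∃ c0 c1 : T N b, c0.1 = cut (π.1 + π'.1) 0 ∧ c1.1 = cut (π.1 + π'.1) 1 ∧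
      MvPolynomial.X (R := ℂ) π * MvPolynomial.X π'
        - MvPolynomial.X c0 * MvPolynomial.X c1 ∈ Ideal.span (Igen N b) := by
  have hσ : IsLSPath N b (1+1) (π.1 + π'.1) := isLSPath_add π.2 π'.2
  refine ⟨⟨cut (π.1 + π'.1) 0, cut_isLSPath hbN hσ (by omega)⟩,
    ⟨cut (π.1 + π'.1) 1, cut_isLSPath hbN hσ (by omega)⟩, rfl, rfl, ?_⟩
  by_cases hst : SuppLE π.1 π'.1
  · obtain ⟨h0, h1⟩ := pair_unique π.2 π'.2 hst
    have e0 : (⟨cut (π.1 + π'.1) 0, cut_isLSPath hbN hσ (by omega)⟩ : T N b) = π :=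
      Subtype.ext h0
    have e1 : (⟨cut (π.1 + π'.1) 1, cut_isLSPath hbN hσ (by omega)⟩ : T N b) = π' :=
      Subtype.ext h1
    rw [e0, e1, sub_self]
    exact Ideal.zero_mem _
  · apply Ideal.subset_span
    refine ⟨π, π', _, _, hst, ?_, ?_, rfl⟩
    · exact cut_suppLE (fun i => add_nonneg (π.2.1 i) (π'.2.1 i)) (by omega)
    · intro i
      have := sum_cut hσ i
      rw [show (1+1 : ℕ) = 2 from rfl, Finset.sum_range_succ, Finset.sum_range_one] at this
      simpa [Pi.add_apply] using this

lemma extract : ∀ l : List (T N b), l ≠ [] →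
    ∃ (c : T N b) (m : List (T N b)),
      c.1 = cut (sumPath N b l) 0 ∧ m.length + 1 = l.length ∧
      sumPath N b m = sumPath N b l - c.1 ∧
      ((l.map MvPolynomial.X).prod : MvPolynomial (T N b) ℂ)
        - MvPolynomial.X c * (m.map MvPolynomial.X).prod ∈ Ideal.span (Igen N b)
  | [], h => absurd rfl h
  | [π], _ => by
    refine ⟨π, [], ?_, rfl, ?_, ?_⟩
    · rw [show sumPath N b [π] = π.1 by rw [sumPath_cons, sumPath_nil, add_zero],
        cut_self π.2]
    · funext i
      rw [sumPath_nil, sumPath_cons, sumPath_nil]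
      simp
    · simp
  | π :: π₂ :: t, _ => by
    obtain ⟨c', m', hc', hlen', hsum', hmem'⟩ := extract (π₂ :: t) (by simp)
    set t' := π₂ :: t
    obtain ⟨c0, c1, hc0, hc1, hpair⟩ := pairRel hbN π c'
    have habs : c0.1 = cut (sumPath N b (π :: t')) 0 := by
      rw [hc0, hc', absorb (π.2.1) ((sumPath_isLSPath N b t').1),
        show sumPath N b (π :: t') = π.1 + sumPath N b t' from sumPath_cons N b π t']
    have hσ2 : IsLSPath N b (1+1) (π.1 + c'.1) := isLSPath_add π.2 c'.2
    have hc1sum : c1.1 = π.1 + c'.1 - c0.1 := by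
      funext i
      have := sum_cut hσ2 i
      rw [show (1+1 : ℕ) = 2 from rfl, Finset.sum_range_succ, Finset.sum_range_one] at this
      have h0 := congrFun hc0 i
      have h1 := congrFun hc1 i
      simp only [Pi.add_apply] at this
      simp only [Pi.add_apply, Pi.sub_apply]
      rw [h0, h1]
      linarith
    refine ⟨c0, c1 :: m', habs, by simpa using hlen', ?_, ?_⟩
    · rw [show sumPath N b (c1 :: m') = c1.1 + sumPath N b m' from sumPath_cons N b c1 m',
        hsum', hc1sum, show sumPath N b (π :: t') = π.1 + sumPath N b t' from sumPath_cons N b π t']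
      funext i; simp only [Pi.add_apply, Pi.sub_apply]; ring
    · have expand : ((π :: t').map MvPolynomial.X).prod
          - MvPolynomial.X (R := ℂ) c0 * ((c1 :: m').map MvPolynomial.X).prod
        = MvPolynomial.X π * (((t'.map MvPolynomial.X).prod)
            - MvPolynomial.X c' * (m'.map MvPolynomial.X).prod)
          + (MvPolynomial.X π * MvPolynomial.X c'
            - MvPolynomial.X c0 * MvPolynomial.X c1) * (m'.map MvPolynomial.X).prod := by
        simp only [List.map_cons, List.prod_cons]
        ring
      rw [expand]
      exact Ideal.add_mem _ (Ideal.mul_mem_left _ _ hmem') (Ideal.mul_mem_right _ _ hpair)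

lemma straighten : ∀ (n : ℕ) (l : List (T N b)), l.length = n →
    ∃ m : List (T N b), m.length = n ∧
      (∀ k (hk : k < m.length), (m[k]'hk).1 = cut (sumPath N b l) k) ∧
      sumPath N b m = sumPath N b l ∧
      ((l.map MvPolynomial.X).prod : MvPolynomial (T N b) ℂ)
        - (m.map MvPolynomial.X).prod ∈ Ideal.span (Igen N b)
  | 0, l, hl => by
    have : l = [] := List.length_eq_zero_iff.mp hl
    subst this
    exact ⟨[], rfl, fun k hk => absurd hk (Nat.not_lt_zero k), rfl, by simp⟩
  | n+1, l, hl => by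
    have hne : l ≠ [] := by intro h; subst h; simp at hl
    obtain ⟨c, m', hc, hlen', hsum', hmem'⟩ := extract hbN l hne
    obtain ⟨m'', hlen'', hget'', hsump'', hmem''⟩ := straighten n m' (by omega)
    refine ⟨c :: m'', by simp [hlen''], ?_, ?_, ?_⟩
    · intro k hk
      match k with
      | 0 => simpa using hc
      | k+1 =>
        have hkm : k < m''.length := by simpa using hk
        have := hget'' k hkm
        rw [show (c :: m'')[k+1]'hk = m''[k]'hkm from rfl, this,
          hsum', hc, cut_shift ((sumPath_isLSPath N b l).1) k]
    · rw [show sumPath N b (c :: m'') = c.1 + sumPath N b m'' from sumPath_cons N b c m'',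
        hsump'', hsum']
      funext i; simp only [Pi.add_apply, Pi.sub_apply]; ring
    · have expand : ((l.map MvPolynomial.X).prod : MvPolynomial (T N b) ℂ)
          - ((c :: m'').map MvPolynomial.X).prod
        = ((l.map MvPolynomial.X).prod
            - MvPolynomial.X c * (m'.map MvPolynomial.X).prod)
          + MvPolynomial.X c * ((m'.map MvPolynomial.X).prod
            - (m''.map MvPolynomial.X).prod) := by
        rw [List.map_cons, List.prod_cons]; ring
      rw [expand]
      exact Ideal.add_mem _ hmem' (Ideal.mul_mem_left _ _ hmem'')

end straightening
end S17

namespace S17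
attribute [local instance] Classical.propDecidable

variable {N : ℕ} {b : ℕ → ℕ}

noncomputable def Emap (m : List (T N b)) : T N b →₀ ℕ := Multiset.toFinsupp (↑m)

lemma prodX_multiset (d : T N b →₀ ℕ) :
    ((d.toMultiset.map MvPolynomial.X).prod : MvPolynomial (T N b) ℂ)
      = MvPolynomial.monomial d 1 := by
  rw [Finsupp.toMultiset_map, Finsupp.prod_toMultiset, MvPolynomial.monomial_eq,
    MvPolynomial.C_1, one_mul,
    Finsupp.prod_mapDomain_index (by simp) (by intros; rw [pow_add])]

lemma prodX_list (m : List (T N b)) :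
    ((m.map MvPolynomial.X).prod : MvPolynomial (T N b) ℂ)
      = MvPolynomial.monomial (Emap m) 1 := by
  rw [← prodX_multiset (Emap m), show (Emap m).toMultiset = (↑m : Multiset (T N b)) by
    unfold Emap; simp]
  simp

lemma monomial_eq_prodX_toList (d : T N b →₀ ℕ) :
    ((d.toMultiset.toList.map MvPolynomial.X).prod : MvPolynomial (T N b) ℂ)
      = MvPolynomial.monomial d 1 := by
  have h1 : (↑(d.toMultiset.toList.map (MvPolynomial.X (R := ℂ) (σ := T N b)))
      : Multiset (MvPolynomial (T N b) ℂ)) = d.toMultiset.map MvPolynomial.X := by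
    rw [← Multiset.map_coe, Multiset.coe_toList]
  rw [← prodX_multiset d, ← h1]
  simp

lemma sumPath_multiset (m m' : List (T N b)) (h : (↑m : Multiset (T N b)) = ↑m') :
    sumPath N b m = sumPath N b m' := by
  unfold sumPath
  rw [show (m.map Subtype.val).sum = ((↑m : Multiset (T N b)).map Subtype.val).sum by simp,
    show (m'.map Subtype.val).sum = ((↑m' : Multiset (T N b)).map Subtype.val).sum by simp, h]

lemma degree_unique {r s : ℕ} {σ : ℕ → ℚ} (h1 : IsLSPath N b r σ) (h2 : IsLSPath N b s σ) :
    r = s := by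
  have e1 := h1.2.2.2
  have e2 := h2.2.2.2
  rw [e1] at e2
  exact_mod_cast e2

lemma list_unique (m m' : List (T N b)) (σ : ℕ → ℚ) (hlen : m.length = m'.length)
    (h : ∀ k (hk : k < m.length), (m[k]'hk).1 = cut σ k)
    (h' : ∀ k (hk : k < m'.length), (m'[k]'hk).1 = cut σ k) : m = m' :=
  List.ext_getElem hlen (fun k h1 h2 => Subtype.ext (by rw [h k h1, h' k h2]))

lemma list_sum_apply (l : List (ℕ → ℚ)) (i : ℕ) : l.sum i = (l.map (fun f => f i)).sum := by
  induction l with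
  | nil => rfl
  | cons a t ih => simp [List.sum_cons, Pi.add_apply, ih]

lemma sumPath_finRange (hbN : b N = 1) {r : ℕ} {π : ℕ → ℚ} (hπ : IsLSPath N b r π) :
    sumPath N b ((List.finRange r).map fun k : Fin r =>
      (⟨cut π k.1, cut_isLSPath hbN hπ k.2⟩ : T N b)) = π := by
  funext i
  unfold sumPath
  rw [List.map_map]
  have : (List.map (Subtype.val ∘ fun k : Fin r =>
      (⟨cut π k.1, cut_isLSPath hbN hπ k.2⟩ : T N b)) (List.finRange r)).sum i
      = ((List.finRange r).map (fun k : Fin r => cut π k.1 i)).sum := by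
    rw [list_sum_apply, List.map_map]
    rfl
  rw [this, show ((List.finRange r).map (fun k : Fin r => cut π k.1 i)).sum
    = ∑ k ∈ Finset.range r, cut π k i by rw [Finset.sum_range]; simp [Fin.sum_univ_def]]
  exact sum_cut hπ i

lemma span_le_ker (hbN : b N = 1) :
    Ideal.span (Igen N b) ≤ RingHom.ker (phi N b).toRingHom := by
  rw [Ideal.span_le]
  rintro f ⟨π, π', π₀, π₀', hns, hst, hsum, rfl⟩
  rw [SetLike.mem_coe, RingHom.mem_ker]
  show phi N b _ = 0
  rw [map_sub, map_mul, map_mul, phi_X, phi_X, phi_X, phi_X,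
    ← xpow_mul hbN π.2 π'.2, ← xpow_mul hbN π₀.2 π₀'.2,
    show π₀.1 + π₀'.1 = π.1 + π'.1 from funext fun i => by
      simpa [Pi.add_apply] using hsum i, sub_self]

end S17


open S17 in
/-- Let `R = ℂ[y_π : π an LS-path of degree 1]` and let `φ : R → ℂ[x_0,…,x_N]` be the
`ℂ`-algebra homomorphism with `φ(y_π) = x^π`. Then `φ` maps `R` onto the discrete LS
algebra `A`, and `ker φ` is generated by the quadratic binomials `y_π·y_π' − y_{π₀}·y_{π₀'}`
where `(π, π')` ranges over the non-standard pairs of degree-1 LS-paths and `(π₀, π₀')`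
is the canonical form of `π + π'`, i.e. the standard pair with `π₀ + π₀' = π + π'`. -/
theorem stmt17 (N : ℕ) (hN : 1 ≤ N) (b : ℕ → ℕ) (hb : ∀ i < N, 0 < b i) (hbN : b N = 1) :
    Set.range (⇑(MvPolynomial.aeval
        (fun π : {π : ℕ → ℚ // IsLSPath N b 1 π} => xpow N b π.1) :
          MvPolynomial {π : ℕ → ℚ // IsLSPath N b 1 π} ℂ →ₐ[ℂ]
            MvPolynomial (Fin (N + 1)) ℂ))
      = (discreteLS N b : Set (MvPolynomial (Fin (N + 1)) ℂ)) ∧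
    RingHom.ker (MvPolynomial.aeval
        (fun π : {π : ℕ → ℚ // IsLSPath N b 1 π} => xpow N b π.1) :
          MvPolynomial {π : ℕ → ℚ // IsLSPath N b 1 π} ℂ →ₐ[ℂ]
            MvPolynomial (Fin (N + 1)) ℂ).toRingHom
      = Ideal.span {f | ∃ π π' π₀ π₀' : {π : ℕ → ℚ // IsLSPath N b 1 π},
          ¬ SuppLE π.1 π'.1 ∧ SuppLE π₀.1 π₀'.1 ∧
          (∀ i, π₀.1 i + π₀'.1 i = π.1 i + π'.1 i) ∧
          f = MvPolynomial.X π * MvPolynomial.X π'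
            - MvPolynomial.X π₀ * MvPolynomial.X π₀'} := by
  classical
  constructor
  · -- range = discreteLS
    show Set.range ⇑(phi N b) = (discreteLS N b : Set (MvPolynomial (Fin (N + 1)) ℂ))
    apply Set.Subset.antisymm
    · rintro x ⟨f, rfl⟩
      rw [SetLike.mem_coe]
      nth_rewrite 1 [MvPolynomial.as_sum f]
      rw [map_sum]
      apply Submodule.sum_mem
      intro d _
      rw [show (MvPolynomial.monomial d) (MvPolynomial.coeff d f)
          = (MvPolynomial.coeff d f) • (MvPolynomial.monomial d (1:ℂ)) by
        rw [MvPolynomial.smul_monomial, smul_eq_mul, mul_one], map_smul]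
      apply Submodule.smul_mem
      apply Submodule.subset_span
      refine ⟨d.toMultiset.toList.length, sumPath N b d.toMultiset.toList,
        sumPath_isLSPath N b _, ?_⟩
      rw [← monomial_eq_prodX_toList d]
      exact phi_prod N b hbN d.toMultiset.toList
    · intro x hx
      rw [SetLike.mem_coe] at hx
      refine Submodule.span_induction ?_ ?_ ?_ ?_ hx
      · rintro p ⟨r, π, hπ, rfl⟩
        exact ⟨(((List.finRange r).map fun k : Fin r =>
            (⟨cut π k.1, cut_isLSPath hbN hπ k.2⟩ : T N b)).map MvPolynomial.X).prod,
          by rw [phi_prod N b hbN, sumPath_finRange hbN hπ]⟩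
      · exact ⟨0, map_zero _⟩
      · rintro x y _ _ ⟨a, rfl⟩ ⟨c, rfl⟩
        exact ⟨a + c, map_add _ _ _⟩
      · rintro c x _ ⟨a, rfl⟩
        exact ⟨c • a, map_smul _ _ _⟩
  · -- kernel
    show RingHom.ker (phi N b).toRingHom = Ideal.span (Igen N b)
    apply le_antisymm ?_ (span_le_ker hbN)
    intro f hf
    rw [RingHom.mem_ker] at hf
    have hf' : phi N b f = 0 := hf
    have H : ∀ d : T N b →₀ ℕ, ∃ m : List (T N b),
        m.length = d.toMultiset.toList.length ∧
        (∀ k (hk : k < m.length), (m[k]'hk).1 = cut (sumPath N b d.toMultiset.toList) k) ∧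
        sumPath N b m = sumPath N b d.toMultiset.toList ∧
        MvPolynomial.monomial d 1 - (m.map MvPolynomial.X).prod ∈ Ideal.span (Igen N b) := by
      intro d
      obtain ⟨m, h1, h2, h3, h4⟩ := straighten hbN d.toMultiset.toList.length d.toMultiset.toList rfl
      exact ⟨m, h1, h2, h3, by rwa [monomial_eq_prodX_toList] at h4⟩
    choose md hlen hget hsump hmem using H
    set σf : (T N b →₀ ℕ) → (ℕ → ℚ) := fun d => sumPath N b d.toMultiset.toList with hσf
    have hLS : ∀ d, IsLSPath N b d.toMultiset.toList.length (σf d) :=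
      fun d => sumPath_isLSPath N b _
    have keyEq : ∀ d d' : T N b →₀ ℕ,
        (Emap (md d) = Emap (md d')) ↔ xv N b (σf d) = xv N b (σf d') := by
      intro d d'
      constructor
      · intro h
        have hmm : (↑(md d) : Multiset (T N b)) = ↑(md d') :=
          Multiset.coe_eq_coe.mpr (by simpa [Emap] using congrArg Finsupp.toMultiset h)
        have h2 : sumPath N b (md d) = sumPath N b (md d') := sumPath_multiset _ _ hmm
        rw [hsump, hsump] at h2
        rw [show σf d = σf d' from h2]
      · intro h
        have hσeq : σf d = σf d' := xv_inj hN hb hbN (hLS d) (hLS d') h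
        have hdeg : d.toMultiset.toList.length = d'.toMultiset.toList.length :=
          degree_unique (hLS d) (hσeq ▸ hLS d')
        have hmd : md d = md d' := by
          refine list_unique _ _ (σf d) (by rw [hlen, hlen, hdeg]) (fun k hk => hget d k hk)
            (fun k hk => by rw [hget d' k hk, hσeq])
        rw [hmd]
    set g : MvPolynomial (T N b) ℂ :=
      ∑ d ∈ f.support, (MvPolynomial.coeff d f) • (MvPolynomial.monomial (Emap (md d)) 1)
      with hg
    have hfg : f - g ∈ Ideal.span (Igen N b) := by
      nth_rewrite 1 [MvPolynomial.as_sum f]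
      rw [hg, ← Finset.sum_sub_distrib]
      apply Ideal.sum_mem
      intro d _
      have e1 : MvPolynomial.monomial d (MvPolynomial.coeff d f)
            - MvPolynomial.coeff d f • MvPolynomial.monomial (Emap (md d)) 1
          = MvPolynomial.coeff d f
            • (MvPolynomial.monomial d 1 - MvPolynomial.monomial (Emap (md d)) 1) := by
        rw [smul_sub, MvPolynomial.smul_monomial, MvPolynomial.smul_monomial,
          smul_eq_mul, mul_one]
      rw [e1, smul_eq_C_mul]
      refine Ideal.mul_mem_left _ _ ?_
      have := hmem d
      rwa [prodX_list] at this
    have hφg : phi N b g = 0 := by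
      have h1 : phi N b (f - g) = 0 := span_le_ker hbN hfg
      rw [map_sub, hf', zero_sub, neg_eq_zero] at h1
      exact h1
    have hφg' : phi N b g = ∑ d ∈ f.support,
        (MvPolynomial.coeff d f) • (MvPolynomial.monomial (xv N b (σf d)) (1:ℂ)) := by
      rw [hg, map_sum]
      apply Finset.sum_congr rfl
      intro d _
      rw [map_smul, ← prodX_list, phi_prod N b hbN, hsump, xpow_eq]
    have hg0 : g = 0 := by
      apply MvPolynomial.ext
      intro u
      rw [MvPolynomial.coeff_zero, hg, MvPolynomial.coeff_sum]
      have hco : ∀ d ∈ f.support,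
          MvPolynomial.coeff u ((MvPolynomial.coeff d f) • MvPolynomial.monomial (Emap (md d)) (1:ℂ))
            = MvPolynomial.coeff d f * (if Emap (md d) = u then 1 else 0) := fun d _ => by
        rw [MvPolynomial.coeff_smul, MvPolynomial.coeff_monomial]; simp
      rw [Finset.sum_congr rfl hco]
      by_cases hex : ∃ d₀ ∈ f.support, Emap (md d₀) = u
      · obtain ⟨d₀, hd₀, hu⟩ := hex
        calc ∑ d ∈ f.support, MvPolynomial.coeff d f * ite (Emap (md d) = u) 1 0
            = ∑ d ∈ f.support,
                MvPolynomial.coeff d f * ite (xv N b (σf d) = xv N b (σf d₀)) 1 0 :=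
              Finset.sum_congr rfl (fun d _ => by
                rw [if_congr (by rw [← hu, keyEq]) rfl rfl])
          _ = MvPolynomial.coeff (xv N b (σf d₀)) (phi N b g) := by
              rw [hφg', MvPolynomial.coeff_sum]
              apply Finset.sum_congr rfl
              intro d _
              rw [MvPolynomial.coeff_smul, MvPolynomial.coeff_monomial]
              simp
          _ = 0 := by rw [hφg, MvPolynomial.coeff_zero]
      · push_neg at hex
        exact Finset.sum_eq_zero fun d hd => by rw [if_neg (hex d hd), mul_zero]
    have hfin : f = f - g := by rw [hg0, sub_zero]
    rw [hfin]
    exact hfg
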